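/- Let p be a prime, K a field of characteristic p, and φ = ∑_{i=0}^{n} a_i X^(p^i) ∈ K[X] a nonzero additive polynomial. Let L = K(X) be the rational function field and let F be the intermediate field of L/K generated over K by the element φ(X). Then L is a separable extension of F if and only if a_0 ≠ 0. -/

import Mathlib

open Polynomial

lemma X_not_mem_adjoin_X_pow (p : ℕ) (hp : p.Prime) (K : Type*) [Field K] :
    (RatFunc.X : RatFunc K) ∉ IntermediateField.adjoin K {(RatFunc.X : RatFunc K) ^ p} := by
  intro hmem
  rw [IntermediateField.mem_adjoin_simple_iff] at hmem
  obtain ⟨f, g, hfg⟩ := hmem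
  have hXp : (RatFunc.X : RatFunc K) ^ p = algebraMap K[X] (RatFunc K) (X ^ p) := by
    rw [map_pow, RatFunc.algebraMap_X]
  rw [hXp, Polynomial.aeval_algebraMap_apply, Polynomial.aeval_algebraMap_apply] at hfg
  by_cases hg : aeval (X ^ p : K[X]) g = 0
  · rw [hg, map_zero, div_zero] at hfg
    exact RatFunc.X_ne_zero hfg
  · have hg' : aeval (X ^ p : K[X]) g ≠ 0 := hg
    have hinj := IsFractionRing.injective K[X] (RatFunc K)
    have hg'' : algebraMap K[X] (RatFunc K) (aeval (X ^ p : K[X]) g) ≠ 0 := by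
      simpa using fun h => hg' (hinj (by simpa using h))
    have key : (X : K[X]) * aeval (X ^ p : K[X]) g = aeval (X ^ p : K[X]) f := by
      apply hinj
      rw [map_mul]
      rw [eq_div_iff hg''] at hfg
      rw [RatFunc.algebraMap_X, ← hfg]
    have hc : ∀ q : K[X], (aeval (X ^ p : K[X]) q).natDegree = q.natDegree * p := by
      intro q
      rw [← comp_eq_aeval, natDegree_comp, natDegree_X_pow]
    have hdeg := congrArg natDegree key
    rw [natDegree_mul X_ne_zero hg', natDegree_X, hc f, hc g] at hdeg
    have h1 : p ∣ g.natDegree * p := Dvd.intro_left _ rfl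
    have : p ∣ 1 := by
      rw [Nat.add_comm] at hdeg
      exact (Nat.dvd_add_right h1).mp (hdeg ▸ Dvd.intro_left _ rfl)
    exact hp.ne_one (Nat.dvd_one.mp this)

lemma adjoin_X_eq_top (K : Type*) [Field K] :
    IntermediateField.adjoin K {(RatFunc.X : RatFunc K)} = ⊤ := by
  rw [eq_top_iff]
  intro y _
  rw [IntermediateField.mem_adjoin_simple_iff]
  refine ⟨y.num, y.denom, ?_⟩
  rw [← RatFunc.algebraMap_X, Polynomial.aeval_algebraMap_apply,
    Polynomial.aeval_algebraMap_apply, aeval_X_left_apply, aeval_X_left_apply,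
    RatFunc.num_div_denom]

theorem separable_ratFunc_adjoin_additive_poly_iff (p : ℕ) (hp : p.Prime)
    (K : Type*) [Field K] [CharP K p] (n : ℕ) (a : ℕ → K)
    (φ : Polynomial K)
    (hφdef : φ = ∑ i ∈ Finset.range (n + 1), Polynomial.C (a i) * Polynomial.X ^ p ^ i)
    (hφ : φ ≠ 0) :
    letI F : IntermediateField K (RatFunc K) :=
      IntermediateField.adjoin K {Polynomial.aeval (RatFunc.X : RatFunc K) φ}
    Algebra.IsSeparable F (RatFunc K) ↔ a 0 ≠ 0 := by
  set F : IntermediateField K (RatFunc K) :=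
    IntermediateField.adjoin K {Polynomial.aeval (RatFunc.X : RatFunc K) φ} with hF
  set L := RatFunc K
  set x : L := RatFunc.X with hx
  haveI : Fact p.Prime := ⟨hp⟩
  constructor
  · intro hsep ha0
    -- E = K(x^p)
    set E : IntermediateField K L := IntermediateField.adjoin K {x ^ p} with hE
    have hxpE : x ^ p ∈ E := IntermediateField.mem_adjoin_simple_self K _
    have hφE : aeval x φ ∈ E := by
      rw [hφdef, map_sum]
      refine Subfield.sum_mem _ fun i hi => ?_
      simp only [map_mul, map_pow, aeval_C, aeval_X]
      cases i with
      | zero =>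
        rw [ha0, map_zero, zero_mul]
        exact E.zero_mem
      | succ j =>
        refine mul_mem (E.algebraMap_mem _) (by
          rw [pow_succ', pow_mul]
          exact pow_mem hxpE _)
    have hFE : F ≤ E := by
      rw [IntermediateField.adjoin_le_iff]
      exact Set.singleton_subset_iff.mpr hφE
    set E' : IntermediateField F L := IntermediateField.extendScalars hFE with hE'
    haveI : Algebra.IsSeparable E' L := Algebra.isSeparable_tower_top_of_isSeparable F E' L
    have hxpE' : x ^ p ∈ E' := hxpE
    set c : E' := ⟨x ^ p, hxpE'⟩ with hc
    have haev : aeval x ((X : E'[X]) ^ p - C c) = 0 := by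
      simp [hc]
    have hint : IsIntegral E' x :=
      ⟨(X : E'[X]) ^ p - C c, monic_X_pow_sub_C _ hp.ne_zero, by simpa using haev⟩
    have hdvd : minpoly E' x ∣ (X : E'[X]) ^ p - C c := minpoly.dvd _ _ haev
    haveI : CharP L p := charP_of_injective_algebraMap (algebraMap K L).injective p
    set M : L[X] := (minpoly E' x).map (algebraMap E' L) with hM
    have hmap : ((X : E'[X]) ^ p - C c).map (algebraMap E' L) = ((X : L[X]) - C x) ^ p := by
      rw [Polynomial.map_sub, Polynomial.map_pow, map_X, map_C, sub_pow_char]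
      congr 1
      rw [← map_pow]
      rfl
    have hMdvd : M ∣ ((X : L[X]) - C x) ^ p := hmap ▸ Polynomial.map_dvd _ hdvd
    have hMsep : M.Separable := Polynomial.Separable.map (Algebra.IsSeparable.isSeparable E' x)
    obtain ⟨i, hip, hassoc⟩ := (dvd_prime_pow (prime_X_sub_C x) p).mp hMdvd
    have hile : i ≤ 1 := by
      by_contra hgt
      push_neg at hgt
      have h2 : ((X : L[X]) - C x) * ((X : L[X]) - C x) ∣ M := by
        refine dvd_trans ?_ hassoc.symm.dvd
        rw [← sq]
        exact pow_dvd_pow _ hgt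
      exact not_isUnit_X_sub_C x (hMsep.squarefree _ h2)
    have hdegM : M.degree = i := by
      rw [degree_eq_degree_of_associated hassoc, degree_pow, degree_X_sub_C]
      simp
    have hnd : (minpoly E' x).natDegree = i := by
      rw [← natDegree_map (algebraMap E' L), ← hM]
      exact natDegree_eq_of_degree_eq_some hdegM
    have hdeg1 : (minpoly E' x).natDegree = 1 := by
      have h1 := minpoly.natDegree_pos hint
      omega
    have hxmem : x ∈ (algebraMap E' L).range := minpoly.natDegree_eq_one_iff.mp hdeg1
    obtain ⟨y, hy⟩ := hxmem
    have : x ∈ E := by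
      rw [← hy]
      exact y.2
    exact X_not_mem_adjoin_X_pow p hp K this
  · intro ha0
    -- q = φ.map - C (φ(x))
    have hmem : aeval x φ ∈ F := IntermediateField.mem_adjoin_simple_self K _
    set t : F := ⟨aeval x φ, hmem⟩ with ht
    set q : F[X] := φ.map (algebraMap K F) - C t with hq
    have haev : aeval x q = 0 := by
      rw [hq, map_sub, aeval_map_algebraMap, aeval_C]
      exact sub_eq_zero_of_eq rfl
    have hderφ : derivative φ = C (a 0) := by
      rw [hφdef, derivative_sum]
      rw [Finset.sum_eq_single 0]
      · simp
      · intro i hi hi0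
        rw [derivative_C_mul_X_pow]
        have : ((p ^ i : ℕ) : K) = 0 := by
          rw [Nat.cast_pow, CharP.cast_eq_zero K p, zero_pow hi0]
        rw [this, mul_zero, map_zero, zero_mul]
      · intro h
        simp at h
    have hderq : derivative q = C (algebraMap K F (a 0)) := by
      rw [hq, derivative_sub, derivative_C, sub_zero, derivative_map, hderφ, map_C]
    have hc0 : algebraMap K F (a 0) ≠ 0 := by
      simpa using ha0
    have hqsep : q.Separable := by
      rw [Polynomial.Separable, hderq]
      exact ⟨0, C (algebraMap K F (a 0))⁻¹, by
        rw [zero_mul, zero_add, ← C_mul, inv_mul_cancel₀ hc0, C_1]⟩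
    have hxsep : IsSeparable F x := hqsep.of_dvd (minpoly.dvd F x haev)
    haveI : Algebra.IsSeparable F (IntermediateField.adjoin F {x}) :=
      (IntermediateField.isSeparable_adjoin_simple_iff_isSeparable F L).mpr hxsep
    have htop : IntermediateField.adjoin F {x} = ⊤ := by
      apply IntermediateField.restrictScalars_injective K
      rw [IntermediateField.restrictScalars_top, IntermediateField.restrictScalars_adjoin]
      rw [eq_top_iff, ← adjoin_X_eq_top K]
      exact IntermediateField.adjoin.mono K _ _ (Set.subset_union_right)
    exact ⟨fun y => IntermediateField.isSeparable_of_mem_isSeparable F L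
      (htop.symm ▸ IntermediateField.mem_top)⟩
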